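/- Let X and Y be disjoint finite sets with S = X ∪ Y, and suppose h_a : S → Fin m_a, h_b : S → Fin m_b are such that the bipartite graph on Fin m_a ⊕ Fin m_b with an edge (h_a(k), h_b(k)) for each k ∈ S is simple and acyclic (in particular no two distinct keys generate the same edge). Then there exist bitmaps a : Fin m_a → ZMod 2 and b : Fin m_b → ZMod 2 such that for every k ∈ S, a(h_a(k)) + b(h_b(k)) = 0 if k ∈ X and = 1 if k ∈ Y. -/

import Mathlib

open SimpleGraph Sum

private lemma isAcyclic_mono' {V : Type*} {G H : SimpleGraph V} (hle : G ≤ H)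
    (h : H.IsAcyclic) : G.IsAcyclic := fun _ c hc => h (c.mapLe hle) (hc.mapLe hle)

private lemma othello_aux {K : Type*} [DecidableEq K]
    (m_a m_b : ℕ) (h_a : K → Fin m_a) (h_b : K → Fin m_b) (t : K → ZMod 2) :
    ∀ S : Finset K,
    (∀ k ∈ S, ∀ k' ∈ S, k ≠ k' → (h_a k, h_b k) ≠ (h_a k', h_b k')) →
    (SimpleGraph.fromEdgeSet
        {e | ∃ k ∈ S, e = s(Sum.inl (h_a k), Sum.inr (h_b k))}).IsAcyclic →
    ∃ (a : Fin m_a → ZMod 2) (b : Fin m_b → ZMod 2),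
      ∀ k ∈ S, a (h_a k) + b (h_b k) = t k := by
  classical
  intro S
  induction S using Finset.strongInduction with
  | _ S ih =>
    rcases S.eq_empty_or_nonempty with rfl | ⟨k, hk⟩
    · intro _ _; exact ⟨0, 0, by simp⟩
    intro hsimple hacyc
    set S' := S.erase k with hS'
    have hsub : S' ⊂ S := Finset.erase_ssubset hk
    have hle : (SimpleGraph.fromEdgeSet
        {e | ∃ k' ∈ S', e = s(Sum.inl (h_a k'), Sum.inr (h_b k'))}) ≤
        (SimpleGraph.fromEdgeSet
        {e | ∃ k' ∈ S, e = s(Sum.inl (h_a k'), Sum.inr (h_b k'))}) := by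
      apply SimpleGraph.fromEdgeSet_mono
      rintro e ⟨k', hk', rfl⟩
      exact ⟨k', (Finset.mem_erase.mp hk').2, rfl⟩
    obtain ⟨a, b, hab⟩ := ih S' hsub
      (fun x hx y hy => hsimple x (Finset.mem_of_mem_erase hx) y (Finset.mem_of_mem_erase hy))
      (isAcyclic_mono' hle hacyc)
    set G := (SimpleGraph.fromEdgeSet
        {e | ∃ k' ∈ S, e = s(Sum.inl (h_a k'), Sum.inr (h_b k'))}) with hG
    set G' := (SimpleGraph.fromEdgeSet
        {e | ∃ k' ∈ S', e = s(Sum.inl (h_a k'), Sum.inr (h_b k'))}) with hG'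
    -- edge of k is a bridge in G
    have hadj : G.Adj (inl (h_a k)) (inr (h_b k)) := by
      rw [hG, SimpleGraph.fromEdgeSet_adj]
      exact ⟨⟨k, hk, rfl⟩, by simp⟩
    have hbridge := (SimpleGraph.isAcyclic_iff_forall_adj_isBridge.mp hacyc) hadj
    rw [SimpleGraph.isBridge_iff] at hbridge
    -- G' ≤ G \ edge k
    have hle2 : G' ≤ G \ SimpleGraph.fromEdgeSet {s(inl (h_a k), inr (h_b k))} := by
      intro u v huv
      rw [hG', SimpleGraph.fromEdgeSet_adj] at huv
      obtain ⟨⟨k', hk', he⟩, hne⟩ := huv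
      rw [SimpleGraph.sdiff_adj]
      constructor
      · exact hle (by rw [hG', SimpleGraph.fromEdgeSet_adj]; exact ⟨⟨k', hk', he⟩, hne⟩)
      · rw [SimpleGraph.fromEdgeSet_adj]
        rintro ⟨hmem, -⟩
        rw [Set.mem_singleton_iff] at hmem
        rw [he] at hmem
        rw [Sym2.eq_iff] at hmem
        rcases hmem with ⟨h1, h2⟩ | ⟨h1, h2⟩
        · exact hsimple k' (Finset.mem_of_mem_erase hk') k hk (Finset.mem_erase.mp hk').1
            (by rw [Prod.mk.injEq]; exact ⟨inl_injective h1, inr_injective h2⟩)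
        · exact absurd h1 (by simp)
    have hnr : ¬ G'.Reachable (inl (h_a k)) (inr (h_b k)) :=
      fun h => hbridge (h.mono hle2)
    -- flip function
    set c : (Fin m_a ⊕ Fin m_b) → ZMod 2 :=
      fun v => if G'.Reachable (inl (h_a k)) v then 1 else 0 with hc
    have hcedge : ∀ k' ∈ S', c (inl (h_a k')) = c (inr (h_b k')) := by
      intro k' hk'
      have hadj' : G'.Adj (inl (h_a k')) (inr (h_b k')) := by
        rw [hG', SimpleGraph.fromEdgeSet_adj]
        exact ⟨⟨k', hk', rfl⟩, by simp⟩
      simp only [hc]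
      congr 1
      exact propext ⟨fun h => h.trans hadj'.reachable,
        fun h => h.trans hadj'.symm.reachable⟩
    have hck1 : c (inl (h_a k)) = 1 := if_pos (SimpleGraph.Reachable.refl _)
    have hck0 : c (inr (h_b k)) = 0 := if_neg hnr
    by_cases hsum : a (h_a k) + b (h_b k) = t k
    · refine ⟨a, b, fun x hx => ?_⟩
      rcases eq_or_ne x k with rfl | hxk
      · exact hsum
      · exact hab x (Finset.mem_erase.mpr ⟨hxk, hx⟩)
    · refine ⟨fun x => a x + c (inl x), fun y => b y + c (inr y), fun x hx => ?_⟩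
      rcases eq_or_ne x k with rfl | hxk
      · show a (h_a x) + c (inl (h_a x)) + (b (h_b x) + c (inr (h_b x))) = t x
        rw [show a (h_a x) + c (inl (h_a x)) + (b (h_b x) + c (inr (h_b x))) =
          a (h_a x) + b (h_b x) + (c (inl (h_a x)) + c (inr (h_b x))) by ring, hck1, hck0]
        revert hsum
        generalize a (h_a x) + b (h_b x) = s
        generalize t x = w
        revert s w; decide
      · have hx' : x ∈ S' := Finset.mem_erase.mpr ⟨hxk, hx⟩
        show a (h_a x) + c (inl (h_a x)) + (b (h_b x) + c (inr (h_b x))) = t x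
        rw [show a (h_a x) + c (inl (h_a x)) + (b (h_b x) + c (inr (h_b x))) =
          a (h_a x) + b (h_b x) + (c (inl (h_a x)) + c (inr (h_b x))) by ring,
          hcedge x hx', hab x hx']
        generalize t x = w
        generalize c (inr (h_b x)) = u
        revert w u; decide


/-- If the bipartite graph generated by a hash pair `(h_a, h_b)` on the key
set `S = X ∪ Y` is simple (no two distinct keys generate the same edge) and
acyclic, then there exist bitmaps `a`, `b` correctly classifying `X` and
`Y`: `a (h_a k) + b (h_b k) = 0` for `k ∈ X` and `= 1` for `k ∈ Y`. -/
theorem othello_valid_hash_pair_admits_classifier {K : Type*} [DecidableEq K]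
    (m_a m_b : ℕ) (X Y : Finset K) (hXY : Disjoint X Y)
    (h_a : K → Fin m_a) (h_b : K → Fin m_b)
    (hsimple : ∀ k ∈ X ∪ Y, ∀ k' ∈ X ∪ Y, k ≠ k' →
      (h_a k, h_b k) ≠ (h_a k', h_b k'))
    (hacyc : (SimpleGraph.fromEdgeSet
        {e | ∃ k ∈ X ∪ Y, e = s(Sum.inl (h_a k), Sum.inr (h_b k))}).IsAcyclic) :
    ∃ (a : Fin m_a → ZMod 2) (b : Fin m_b → ZMod 2),
      ∀ k ∈ X ∪ Y, a (h_a k) + b (h_b k) = if k ∈ X then 0 else 1 := by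
  classical
  exact othello_aux m_a m_b h_a h_b (fun k => if k ∈ X then 0 else 1) (X ∪ Y)
    hsimple hacyc
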